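/- arXiv:1912.09696 — 4 statements merged into one kernel-verified Lean document; each statement's English description precedes it below -/
import Mathlib

section
/- Nonsingularity of the linearized central path system: let X, S be symmetric positive definite n×n matrices with XS = ν·I for some ν > 0, and let A_1, ..., A_m be linearly independent symmetric matrices. If symmetric matrices U, V and z ∈ ℝ^m satisfy X·U + V·S = 0, V + Σ_i z_i A_i = 0, and ⟨A_i, U⟩ = 0 for all i, then U = 0, V = 0 and z = 0. -/
open Finset
open Matrix

/-- Trace inner product on real matrices. -/
def ip {n : ℕ} (U V : Matrix (Fin n) (Fin n) ℝ) : ℝ := ∑ i, ∑ j, U i j * V i j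

lemma ip_eq_trace {n : ℕ} (M N : Matrix (Fin n) (Fin n) ℝ) :
    ip M N = (M * Nᵀ).trace := by
  simp [ip, Matrix.trace, Matrix.mul_apply, Matrix.diag]

theorem newton_system_nonsingular {n m : ℕ}
    (A : Fin m → Matrix (Fin n) (Fin n) ℝ) (hA : LinearIndependent ℝ A)
    (hAsymm : ∀ i, (A i).IsSymm)
    (X S U V : Matrix (Fin n) (Fin n) ℝ) (z : Fin m → ℝ) (ν : ℝ) (hν : 0 < ν)
    (hX : X.PosDef) (hS : S.PosDef)
    (hXS : X * S = ν • (1 : Matrix (Fin n) (Fin n) ℝ))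
    (hU : U.IsSymm) (hV : V.IsSymm)
    (h1 : X * U + V * S = 0)
    (h2 : V + ∑ i, z i • A i = 0)
    (h3 : ∀ i, ip (A i) U = 0) :
    U = 0 ∧ V = 0 ∧ z = 0 := by
  have hν0 : (ν : ℝ) ≠ 0 := ne_of_gt hν
  -- S * X = ν • 1
  have hXinv : X * (ν⁻¹ • S) = 1 := by
    rw [Matrix.mul_smul, hXS, smul_smul, inv_mul_cancel₀ hν0, one_smul]
  have hSX : S * X = ν • 1 := by
    have h := mul_eq_one_comm.mp hXinv
    have h' : ν • ((ν⁻¹ • S) * X) = ν • (1 : Matrix (Fin n) (Fin n) ℝ) := by rw [h]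
    rw [Matrix.smul_mul, smul_smul, mul_inv_cancel₀ hν0, one_smul] at h'
    exact h'
  -- ν • U = -(S * V * S)
  have hXU : X * U = -(V * S) := by
    have := h1
    rw [add_eq_zero_iff_eq_neg] at this
    exact this
  have hνU : ν • U = -(S * V * S) := by
    have h := congrArg (fun M => S * M) hXU
    simp only [← mul_assoc, hSX] at h
    rw [Matrix.smul_mul, one_mul] at h
    rw [h, Matrix.mul_neg, mul_assoc]
  -- ip V U = 0
  have hVform : V = -∑ i, z i • A i := by
    rw [add_eq_zero_iff_eq_neg] at h2; exact h2
  have hipVU : ip V U = 0 := by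
    rw [ip_eq_trace, hVform, Matrix.neg_mul, Matrix.trace_neg, Matrix.sum_mul,
      Matrix.trace_sum, neg_eq_zero]
    apply Finset.sum_eq_zero; intro k _
    rw [Matrix.smul_mul, Matrix.trace_smul, ← ip_eq_trace, h3 k, smul_zero]
  -- square root of S
  set R := (open scoped MatrixOrder in CFC.sqrt S) with hRdef
  have hR2 : R * R = S := by
    open scoped MatrixOrder in exact CFC.sqrt_mul_sqrt_self S hS.posSemidef.nonneg
  have hRsymm : Rᵀ = R := by
    have h := (open scoped MatrixOrder in (CFC.sqrt_nonneg S).posSemidef).1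
    rw [Matrix.IsHermitian, Matrix.conjTranspose_eq_transpose_of_trivial] at h
    exact h
  set W := R * V * R with hWdef
  have hWsymm : Wᵀ = W := by
    rw [hWdef, Matrix.transpose_mul, Matrix.transpose_mul, hRsymm, hV.eq, ← mul_assoc]
  -- trace(V*S*V*S) = 0
  have htr : (V * S * V * S).trace = 0 := by
    have e : ν • (V * U) = -(V * S * V * S) := by
      rw [← Matrix.mul_smul, hνU, Matrix.mul_neg, ← mul_assoc, ← mul_assoc]
    have e2 := congrArg Matrix.trace e
    rw [Matrix.trace_smul, Matrix.trace_neg] at e2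
    have e3 : (V * U).trace = ip V U := by rw [ip_eq_trace, hU.eq]
    rw [e3, hipVU, smul_zero] at e2
    have := e2.symm
    rwa [neg_eq_zero] at this
  -- trace(W * W) = 0
  have htrW : (W * W).trace = 0 := by
    have e : W * W = R * (V * (R * R) * V * R) := by rw [hWdef]; noncomm_ring
    rw [e, Matrix.trace_mul_comm]
    have e2 : V * (R * R) * V * R * R = V * S * V * S := by rw [← hR2]; noncomm_ring
    rw [e2, htr]
  -- W = 0
  have hsum : ∑ i, ∑ j, W i j ^ 2 = 0 := by
    have hWentry : ∀ i j, W j i = W i j := fun i j => by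
      have := congrFun (congrFun hWsymm i) j
      simpa [Matrix.transpose_apply] using this
    have e : (W * W).trace = ∑ i, ∑ j, W i j ^ 2 := by
      simp only [Matrix.trace, Matrix.mul_apply, Matrix.diag, sq, Finset.sum_apply]
      apply Finset.sum_congr rfl; intro i _
      apply Finset.sum_congr rfl; intro j _
      rw [hWentry i j]
    rw [← e, htrW]
  have hW0 : W = 0 := by
    ext i j
    have hrow : ∀ i ∈ (univ : Finset (Fin n)), ∑ j, W i j ^ 2 = 0 := by
      intro i _
      have := (Finset.sum_eq_zero_iff_of_nonneg
        (fun i _ => Finset.sum_nonneg fun j _ => sq_nonneg (W i j))).mp hsum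
      exact this i (Finset.mem_univ i)
    have := (Finset.sum_eq_zero_iff_of_nonneg
      (fun j _ => sq_nonneg (W i j))).mp (hrow i (Finset.mem_univ i)) j (Finset.mem_univ j)
    have := sq_eq_zero_iff.mp this
    simpa using this
  -- R is invertible
  have hdetR : IsUnit R.det := by
    rw [isUnit_iff_ne_zero]
    intro h
    have := congrArg Matrix.det hR2
    rw [Matrix.det_mul, h, mul_zero] at this
    exact (ne_of_gt hS.det_pos) this.symm
  have hV0 : V = 0 := by
    have e : R⁻¹ * W * R⁻¹ = V := by
      rw [hWdef]
      calc R⁻¹ * (R * V * R) * R⁻¹ = (R⁻¹ * R) * V * (R * R⁻¹) := by noncomm_ring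
        _ = V := by
          rw [Matrix.nonsing_inv_mul _ hdetR, Matrix.mul_nonsing_inv _ hdetR, one_mul, mul_one]
    rw [← e, hW0, mul_zero, Matrix.zero_mul]
  -- z = 0
  have hsumA : ∑ i, z i • A i = 0 := by
    have := h2
    rw [hV0, zero_add] at this
    exact this
  have hz : z = 0 := funext fun i => Fintype.linearIndependent_iff.mp hA z hsumA i
  -- U = 0
  have hU0 : U = 0 := by
    have : ν • U = 0 := by rw [hνU, hV0]; simp
    rcases smul_eq_zero.mp this with h | h
    · exact absurd h hν0
    · exact h
  exact ⟨hU0, hV0, hz⟩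
end

section
/- Shifted monotonicity of the perturbed primal value: for η' ≥ η ≥ 0 and ε ≥ 0, let v(ε,η) be the infimum of ⟨C + ε·I_d, X⟩ over symmetric PSD X with ⟨A_i, X⟩ = b_i + η⟨A_i, I_p⟩ for all i. Then v(ε,η') - η'·⟨C + ε·I_d, I_p⟩ ≤ v(ε,η) - η·⟨C + ε·I_d, I_p⟩. -/
open Finset

/-- Optimal value (in the extended reals) of the perturbed primal SDP. -/
noncomputable def primalVal {n m : ℕ} (C Id Ip : Matrix (Fin n) (Fin n) ℝ)
    (A : Fin m → Matrix (Fin n) (Fin n) ℝ) (b : Fin m → ℝ) (ε η : ℝ) : EReal :=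
  sInf {v : EReal | ∃ X : Matrix (Fin n) (Fin n) ℝ,
    X.PosSemidef ∧ (∀ i, ip (A i) X = b i + η * ip (A i) Ip) ∧
    v = ((ip (C + ε • Id) X : ℝ) : EReal)}

lemma ip_add_right {n : ℕ} (U V W : Matrix (Fin n) (Fin n) ℝ) :
    ip U (V + W) = ip U V + ip U W := by
  simp [ip, mul_add, Finset.sum_add_distrib]

lemma ip_smul_right {n : ℕ} (U V : Matrix (Fin n) (Fin n) ℝ) (t : ℝ) :
    ip U (t • V) = t * ip U V := by
  simp [ip, Finset.mul_sum]
  congr 1; ext i; congr 1; ext j; ring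

lemma posSemidef_smul {n : ℕ} {V : Matrix (Fin n) (Fin n) ℝ} (hV : V.PosSemidef)
    {t : ℝ} (ht : 0 ≤ t) : (t • V).PosSemidef := by
  constructor
  · unfold Matrix.IsHermitian
    rw [Matrix.conjTranspose_smul, hV.1]
    simp
  · intro x
    have h : (x.sum fun i xi => x.sum fun j xj => star xi * (t • V) i j * xj) =
        t * (x.sum fun i xi => x.sum fun j xj => star xi * V i j * xj) := by
      rw [Finsupp.mul_sum]
      refine Finsupp.sum_congr fun i _ => ?_
      rw [Finsupp.mul_sum]
      refine Finsupp.sum_congr fun j _ => ?_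
      rw [Matrix.smul_apply, smul_eq_mul]; ring
    rw [h]
    exact mul_nonneg ht (hV.2 x)

-- Galois connection: (· - r) ⊣ (· + r) on EReal for a real r.
lemma gc_add (r : ℝ) :
    GaloisConnection (fun x : EReal => x - (r : EReal)) (fun x : EReal => x + (r : EReal)) := by
  intro x y
  exact EReal.sub_le_iff_le_add (Or.inl (EReal.coe_ne_bot r)) (Or.inl (EReal.coe_ne_top r))

lemma sInf_add_real (S : Set EReal) (r : ℝ) :
    sInf S + (r : EReal) = ⨅ v ∈ S, (v + (r : EReal)) :=
  (gc_add r).u_sInf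

lemma add_sub_real (P : EReal) (a b : ℝ) :
    P + (a : EReal) - (b : EReal) = P + ((a - b : ℝ) : EReal) := by
  induction P using EReal.rec with
  | bot => simp [sub_eq_add_neg, ← EReal.coe_neg, ← EReal.coe_add]
  | coe x => norm_cast; ring
  | top => simp [sub_eq_add_neg, ← EReal.coe_neg, ← EReal.coe_add]

theorem primalVal_shifted_monotone_in_eta {n m : ℕ}
    (C Id Ip : Matrix (Fin n) (Fin n) ℝ) (A : Fin m → Matrix (Fin n) (Fin n) ℝ)
    (b : Fin m → ℝ) (hId : Id.PosDef) (hIp : Ip.PosDef)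
    (ε η η' : ℝ) (hε : 0 ≤ ε) (hη : 0 ≤ η) (hηη' : η ≤ η') :
    primalVal C Id Ip A b ε η' - ((η' * ip (C + ε • Id) Ip : ℝ) : EReal) ≤
      primalVal C Id Ip A b ε η - ((η * ip (C + ε • Id) Ip : ℝ) : EReal) := by
  set c : ℝ := ip (C + ε • Id) Ip with hc
  set d : ℝ := η' - η with hd
  have hd0 : 0 ≤ d := by simp [hd]; linarith
  -- Step 1: primalVal at η' is at most primalVal at η plus d * c.
  have key : primalVal C Id Ip A b ε η' ≤ primalVal C Id Ip A b ε η + ((d * c : ℝ) : EReal) := by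
    rw [primalVal, primalVal, sInf_add_real]
    refine le_iInf₂ fun v hv => ?_
    obtain ⟨X, hX, hfeas, rfl⟩ := hv
    apply sInf_le
    refine ⟨X + d • Ip, hX.add (posSemidef_smul hIp.posSemidef hd0), fun i => ?_, ?_⟩
    · rw [ip_add_right, ip_smul_right, hfeas i, hd]; ring
    · rw [ip_add_right, ip_smul_right, ← EReal.coe_add]
  -- Step 2: conclude by arithmetic in EReal.
  calc primalVal C Id Ip A b ε η' - ((η' * c : ℝ) : EReal)
      ≤ primalVal C Id Ip A b ε η + ((d * c : ℝ) : EReal) - ((η' * c : ℝ) : EReal) :=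
        EReal.sub_le_sub key le_rfl
    _ = primalVal C Id Ip A b ε η - ((η * c : ℝ) : EReal) := by
        rw [add_sub_real]
        have : d * c - η' * c = -(η * c) := by rw [hd]; ring
        rw [this, EReal.coe_neg, ← sub_eq_add_neg]
end

section
/- Ramana's example, dual side: the supremum of y_1 over all (y_1, y_2) ∈ ℝ² such that the symmetric matrix [[1 - y_1, 0, 0], [0, -y_2, -y_1], [0, -y_1, 0]] is positive semidefinite equals 0, and it is attained. -/
theorem ramana_dual_value :
    IsGreatest {v : ℝ | ∃ y₁ y₂ : ℝ,
      (!![1 - y₁, 0, 0; 0, -y₂, -y₁; 0, -y₁, 0] : Matrix (Fin 3) (Fin 3) ℝ).PosSemidef ∧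
      v = y₁} 0 := by
  constructor
  · refine ⟨0, 0, ?_, rfl⟩
    rw [Matrix.posSemidef_iff_dotProduct_mulVec]
    constructor
    · ext i j
      fin_cases i <;> fin_cases j <;>
        simp [Matrix.conjTranspose_apply, Matrix.vecHead, Matrix.vecTail]
    · intro x
      have : dotProduct (star x) ((!![1 - 0, 0, 0; 0, -0, -0; 0, -0, 0] : Matrix (Fin 3) (Fin 3) ℝ).mulVec x) = x 0 * x 0 := by
        simp [Matrix.mulVec, dotProduct, Fin.sum_univ_succ]
      rw [this]
      exact mul_self_nonneg _
  · rintro v ⟨y₁, y₂, hpsd, hv⟩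
    subst hv
    by_contra h
    push_neg at h
    set t : ℝ := v / (|y₂| + 1) with ht
    have ht0 : 0 < t := div_pos h (by positivity)
    have hle := (Matrix.posSemidef_iff_dotProduct_mulVec.mp hpsd).2 ![0, t, 1]
    have hq : dotProduct (star ![0, t, 1]) ((!![1 - v, 0, 0; 0, -y₂, -v; 0, -v, 0] : Matrix (Fin 3) (Fin 3) ℝ).mulVec ![0, t, 1]) = -y₂ * t * t - 2 * v * t := by
      simp [Matrix.mulVec, dotProduct, Fin.sum_univ_succ]
      ring
    rw [hq] at hle
    have habs : -y₂ ≤ |y₂| := neg_le_abs y₂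
    have ht1 : t * (|y₂| + 1) = v := div_mul_cancel₀ _ (by positivity)
    nlinarith [mul_pos ht0 ht0, abs_nonneg y₂]
end

section
/- Explicit perturbed optimal value in Example 2: for ε > 0 and η ≥ 0, the supremum of -(1+η)y_1 - η·y_2 over (y_1, y_2) ∈ ℝ² such that [[y_2 + ε, 0, 1], [0, y_1 + ε, 0], [1, 0, ε]] is positive semidefinite equals (1+η)·ε - η·(1 - ε²)/ε. -/
theorem example2_perturbed_value (ε η : ℝ) (hε : 0 < ε) (hη : 0 ≤ η) :
    sSup {v : ℝ | ∃ y₁ y₂ : ℝ,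
      (!![y₂ + ε, 0, 1; 0, y₁ + ε, 0; 1, 0, ε] : Matrix (Fin 3) (Fin 3) ℝ).PosSemidef ∧
      v = -(1 + η) * y₁ - η * y₂} = (1 + η) * ε - η * (1 - ε ^ 2) / ε := by
  have hε' := hε.ne'
  -- membership of the target value
  have hmem : (1 + η) * ε - η * (1 - ε ^ 2) / ε ∈ {v : ℝ | ∃ y₁ y₂ : ℝ,
      (!![y₂ + ε, 0, 1; 0, y₁ + ε, 0; 1, 0, ε] : Matrix (Fin 3) (Fin 3) ℝ).PosSemidef ∧
      v = -(1 + η) * y₁ - η * y₂} := by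
    refine ⟨-ε, (1 - ε ^ 2) / ε, Matrix.PosSemidef.of_dotProduct_mulVec_nonneg ?_ ?_, by ring⟩
    · ext i j; fin_cases i <;> fin_cases j <;> rfl
    · intro x
      have hx : (star x : Fin 3 → ℝ) = x := by simp
      simp only [hx, Matrix.mulVec, dotProduct, Fin.sum_univ_three,
        Matrix.cons_val_zero, Matrix.cons_val_one, Matrix.head_cons, RCLike.ofReal_real_eq_id,
        Matrix.cons_val_two, Matrix.tail_cons, Matrix.of_apply, Matrix.cons_val']
      have h1 : (1 - ε ^ 2) / ε + ε = 1 / ε := by field_simp; ring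
      have key : 0 ≤ (x 0 + ε * x 2) ^ 2 / ε := by positivity
      have : (x 0 + ε * x 2) ^ 2 / ε = (1/ε) * x 0 * x 0 + 2 * x 0 * x 2 + ε * x 2 * x 2 := by
        field_simp; ring
      simp only [h1]
      nlinarith [key, this]
  have hub : ∀ v ∈ {v : ℝ | ∃ y₁ y₂ : ℝ,
      (!![y₂ + ε, 0, 1; 0, y₁ + ε, 0; 1, 0, ε] : Matrix (Fin 3) (Fin 3) ℝ).PosSemidef ∧
      v = -(1 + η) * y₁ - η * y₂}, v ≤ (1 + η) * ε - η * (1 - ε ^ 2) / ε := by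
    rintro v ⟨y₁, y₂, hM, rfl⟩
    have h1 := hM.dotProduct_mulVec_nonneg ![0, 1, 0]
    have h2 := hM.dotProduct_mulVec_nonneg ![-ε, 0, 1]
    simp only [Matrix.mulVec, dotProduct, Fin.sum_univ_three, star,
      Matrix.cons_val_zero, Matrix.cons_val_one, Matrix.head_cons,
      Matrix.cons_val_two, Matrix.tail_cons, Matrix.of_apply, Matrix.cons_val', id_eq] at h1 h2
    -- h1 : 0 ≤ y₁ + ε, h2 : 0 ≤ ε²(y₂+ε) - 2ε + ε
    have hy₁ : -ε ≤ y₁ := by nlinarith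
    have hy₂ : (1 - ε ^ 2) / ε ≤ y₂ := by
      rw [div_le_iff₀ hε]
      nlinarith
    have h3 := mul_le_mul_of_nonneg_left hy₂ hη
    have h4 : η * (1 - ε ^ 2) / ε = η * ((1 - ε ^ 2) / ε) := by ring
    have h5 := mul_nonneg (by linarith : (0:ℝ) ≤ 1 + η) (by linarith : 0 ≤ y₁ + ε)
    nlinarith
  refine le_antisymm (csSup_le ⟨_, hmem⟩ hub) (le_csSup ⟨_, hub⟩ hmem)
end
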